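/- Assume conditions (C1) and (C2) hold for Γ, and let ρ_k > 0. Then the function W(ρ) = (ρ/ρ_k − 1)Γ(ρ) − 2 is strictly increasing on (ρ_k, ∞), W(ρ_k) = −2, and W(ρ) → +∞ as ρ → +∞; consequently there exists a unique ρ_max > ρ_k such that (ρ_max − ρ_k)·Γ(ρ_max) = 2ρ_k. -/

import Mathlib

open Set Filter

/-- Under conditions (C1) and (C2), the function
`W(ρ) = (ρ/ρ_k - 1)Γ(ρ) - 2` is strictly increasing on `(ρ_k, ∞)`,
`W(ρ_k) = -2`, `W(ρ) → +∞` as `ρ → +∞`; consequently there exists a unique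
compressive density limit `ρ_max > ρ_k` with
`(ρ_max - ρ_k)·Γ(ρ_max) = 2ρ_k`. -/
theorem compressive_density_limit
    (Γ : ℝ → ℝ) (Γinf ρk : ℝ)
    (hΓd : ∀ ρ > (0 : ℝ), DifferentiableAt ℝ Γ ρ)
    (hΓd2 : ∀ ρ > (0 : ℝ), DifferentiableAt ℝ (deriv Γ) ρ)
    -- condition (C1)
    (hC1a : ∀ ρ > (0 : ℝ), deriv Γ ρ ≤ 0)
    (hC1b : ∀ ρ > (0 : ℝ), 0 ≤ deriv (fun x => x * Γ x) ρ)
    (hC1c : ∀ ρ > (0 : ℝ), 0 ≤ deriv (deriv (fun x => x * Γ x)) ρ)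
    -- condition (C2)
    (hΓinf : 0 < Γinf)
    (hC2a : ∀ ρ > (0 : ℝ), Γinf ≤ Γ ρ)
    (hC2b : ∀ ρ > (0 : ℝ), Γ ρ ≤ Γinf + 2)
    (hρk : 0 < ρk) :
    StrictMonoOn (fun ρ => (ρ / ρk - 1) * Γ ρ - 2) (Ioi ρk) ∧
    (ρk / ρk - 1) * Γ ρk - 2 = -2 ∧
    Tendsto (fun ρ => (ρ / ρk - 1) * Γ ρ - 2) atTop atTop ∧
    (∃! ρmax : ℝ, ρk < ρmax ∧ (ρmax - ρk) * Γ ρmax = 2 * ρk) := by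
  have hpos : ∀ x ∈ Ici ρk, (0:ℝ) < x := fun x hx => lt_of_lt_of_le hρk hx
  have hcontΓ : ContinuousOn Γ (Ici ρk) := fun x hx =>
    ((hΓd x (hpos x hx)).continuousAt).continuousWithinAt
  -- monotone facts
  have hmono : MonotoneOn (fun x => x * Γ x) (Ici ρk) := by
    apply monotoneOn_of_deriv_nonneg (convex_Ici ρk)
    · exact continuousOn_id.mul hcontΓ
    · intro x hx
      rw [interior_Ici] at hx
      exact ((differentiableAt_id.mul (hΓd x (hρk.trans hx)))).differentiableWithinAt
    · intro x hx
      rw [interior_Ici] at hx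
      exact hC1b x (hρk.trans hx)
  have hanti : AntitoneOn Γ (Ici ρk) := by
    apply antitoneOn_of_deriv_nonpos (convex_Ici ρk) hcontΓ
    · intro x hx
      rw [interior_Ici] at hx
      exact (hΓd x (hρk.trans hx)).differentiableWithinAt
    · intro x hx
      rw [interior_Ici] at hx
      exact hC1a x (hρk.trans hx)
  -- rewriting of W
  have hWeq : ∀ x, (x / ρk - 1) * Γ x - 2 = (x * Γ x - ρk * Γ x) / ρk - 2 := by
    intro x
    field_simp
  -- strict monotonicity
  have hSM : StrictMonoOn (fun ρ => (ρ / ρk - 1) * Γ ρ - 2) (Ioi ρk) := by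
    intro a ha b hb hab
    have ha' : ρk ≤ a := le_of_lt ha
    have hb' : ρk ≤ b := le_of_lt hb
    have h1 : a * Γ a ≤ b * Γ b := hmono ha' hb' hab.le
    have h2 : Γ b ≤ Γ a := hanti ha' hb' hab.le
    have hΓa : Γinf ≤ Γ a := hC2a a (hρk.trans ha)
    have hnum : a * Γ a - ρk * Γ a < b * Γ b - ρk * Γ b := by
      rcases lt_or_eq_of_le h2 with h | h
      · nlinarith
      · have hΓb : 0 < Γ b := lt_of_lt_of_le hΓinf (hC2a b (hρk.trans hb))
        nlinarith
    simp only
    rw [hWeq a, hWeq b]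
    have hdiv : (a * Γ a - ρk * Γ a) / ρk < (b * Γ b - ρk * Γ b) / ρk :=
      div_lt_div_of_pos_right hnum hρk
    linarith
  -- value at ρk
  have hWk : (ρk / ρk - 1) * Γ ρk - 2 = -2 := by
    rw [div_self hρk.ne']
    ring
  -- tendsto
  have hT : Tendsto (fun ρ => (ρ / ρk - 1) * Γ ρ - 2) atTop atTop := by
    have h0 : Tendsto (fun ρ : ℝ => (ρ / ρk - 1) * Γinf - 2) atTop atTop := by
      apply tendsto_atTop_add_const_right
      apply Tendsto.atTop_mul_const hΓinf
      apply tendsto_atTop_add_const_right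
      exact tendsto_id.atTop_div_const hρk
    apply tendsto_atTop_mono' _ _ h0
    filter_upwards [eventually_ge_atTop ρk] with ρ hρ
    have hΓρ : Γinf ≤ Γ ρ := hC2a ρ (hρk.trans_le hρ)
    have hfac : 0 ≤ ρ / ρk - 1 := by
      have : (1:ℝ) ≤ ρ / ρk := (one_le_div hρk).mpr hρ
      linarith
    nlinarith
  refine ⟨hSM, hWk, hT, ?_⟩
  -- existence
  have heq : ∀ x, (x / ρk - 1) * Γ x - 2 = ((x - ρk) * Γ x - 2 * ρk) / ρk := by
    intro x
    field_simp
  obtain ⟨b, hb0, hbk⟩ := ((hT.eventually (eventually_gt_atTop 0)).and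
    (eventually_gt_atTop ρk)).exists
  have hWcont : ContinuousOn (fun ρ => (ρ / ρk - 1) * Γ ρ - 2) (Icc ρk b) := by
    apply ContinuousOn.sub _ continuousOn_const
    apply ContinuousOn.mul
    · exact ((continuousOn_id.div_const ρk).sub continuousOn_const)
    · exact hcontΓ.mono (Icc_subset_Ici_self)
  have hmem : (0:ℝ) ∈ Ioo ((ρk / ρk - 1) * Γ ρk - 2) ((b / ρk - 1) * Γ b - 2) := by
    rw [hWk]
    exact ⟨by norm_num, hb0⟩
  obtain ⟨ρm, hρm, hWρm⟩ := intermediate_value_Ioo hbk.le hWcont hmem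
  have hρmk : ρk < ρm := hρm.1
  have hWρm' : (ρm / ρk - 1) * Γ ρm - 2 = 0 := hWρm
  have hroot : (ρm - ρk) * Γ ρm = 2 * ρk := by
    rw [heq] at hWρm'
    have := (div_eq_zero_iff.mp hWρm').resolve_right hρk.ne'
    linarith
  refine ⟨ρm, ⟨hρmk, hroot⟩, ?_⟩
  rintro y ⟨hy1, hy2⟩
  have hWy : (y / ρk - 1) * Γ y - 2 = 0 := by
    rw [heq, hy2]
    simp
  exact hSM.injOn hy1 hρmk (by show (y / ρk - 1) * Γ y - 2 = (ρm / ρk - 1) * Γ ρm - 2; rw [hWy, hWρm'])
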